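/- The Poisson bracket {X_i, X_j} = ε_{ij}·X_i·X_j is preserved under cluster X-mutation: if X'_i are defined from X_i by the cluster X-mutation in direction k (X'_k = X_k^{-1}, X'_i = X_i(1+X_k^{-sgn(ε_{ik})})^{-ε_{ik}} for i ≠ k), and ε' is the mutated matrix, then {X'_i, X'_j} = ε'_{ij}·X'_i·X'_j, where the bracket of the X'_i is computed from the brackets of the X_i via the Leibniz rule. -/

import Mathlib

open scoped BigOperators

/-- Matrix mutation in direction `k`. -/
def mutate {I : Type*} [DecidableEq I] (ε : I → I → ℤ) (k : I) : I → I → ℤ :=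
  fun i j =>
    if i = k ∨ j = k then -ε i j
    else ε i j + (|ε i k| * ε k j + ε i k * |ε k j|) / 2

/-- The `i`-th mutated cluster X-coordinate, as a function on the torus (ℝ_{>0})^I. -/
noncomputable def xMutFun {I : Type*} [DecidableEq I] (ε : I → I → ℤ) (k i : I) :
    (I → ℝ) → ℝ :=
  fun x =>
    if i = k then (x k)⁻¹
    else x i * (1 + x k ^ (-(Int.sign (ε i k)))) ^ (-(ε i k))

/-- The Poisson bracket on functions on (ℝ_{>0})^I determined on coordinates by
`{x_i, x_j} = ε_{ij} x_i x_j`, computed via the Leibniz rule. -/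
noncomputable def poissonBracket {I : Type*} [Fintype I] [DecidableEq I]
    (ε : I → I → ℤ) (f g : (I → ℝ) → ℝ) (x : I → ℝ) : ℝ :=
  ∑ a, ∑ b, (ε a b : ℝ) * x a * x b *
    (fderiv ℝ f x (Pi.single a 1)) * (fderiv ℝ g x (Pi.single b 1))

lemma fderiv_xMutFun_k {I : Type*} [Fintype I] [DecidableEq I] (ε : I → I → ℤ) (k : I)
    (x : I → ℝ) (hpos : ∀ a, 0 < x a) (a : I) :
    fderiv ℝ (xMutFun ε k k) x (Pi.single a 1) =
      (if k = a then -((x k) ^ 2)⁻¹ else 0) := by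
  have h1 : HasFDerivAt (xMutFun ε k k)
      ((-((x k) ^ 2)⁻¹) • (ContinuousLinearMap.proj k : (I → ℝ) →L[ℝ] ℝ)) x := by
    have := (hasDerivAt_inv (hpos k).ne').comp_hasFDerivAt x
      (hasFDerivAt_apply (𝕜 := ℝ) k x)
    have e : xMutFun ε k k = (fun y : ℝ => y⁻¹) ∘ fun f : I → ℝ => f k := by
      ext y; simp [xMutFun]
    rw [e]; exact this
  rw [h1.fderiv]
  simp only [ContinuousLinearMap.smul_apply, ContinuousLinearMap.proj_apply,
    Pi.single_apply, smul_eq_mul]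
  split_ifs <;> ring

lemma fderiv_xMutFun_ne {I : Type*} [Fintype I] [DecidableEq I] (ε : I → I → ℤ) (k i : I)
    (hik : i ≠ k) (x : I → ℝ) (hpos : ∀ a, 0 < x a) (a : I) :
    fderiv ℝ (xMutFun ε k i) x (Pi.single a 1) =
      (if i = a then (1 + x k ^ (-(Int.sign (ε i k)))) ^ (-(ε i k)) else 0)
      + (if k = a then x i * (((-(ε i k) : ℤ) : ℝ) * (1 + x k ^ (-(Int.sign (ε i k)))) ^ (-(ε i k) - 1)
          * (((-(Int.sign (ε i k)) : ℤ) : ℝ) * x k ^ (-(Int.sign (ε i k)) - 1))) else 0) := by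
  set s : ℤ := -(Int.sign (ε i k))
  set m : ℤ := -(ε i k)
  have hxk := hpos k
  have hq : (0 : ℝ) < 1 + x k ^ s := by positivity
  have hD : HasDerivAt (fun t : ℝ => (1 + t ^ s) ^ m)
      ((m : ℝ) * (1 + x k ^ s) ^ (m - 1) * ((s : ℝ) * x k ^ (s - 1))) (x k) := by
    have h1 : HasDerivAt (fun t : ℝ => 1 + t ^ s) ((s : ℝ) * x k ^ (s - 1)) (x k) :=
      (hasDerivAt_zpow s (x k) (Or.inl (hpos k).ne')).const_add 1
    exact (hasDerivAt_zpow m (1 + x k ^ s) (Or.inl hq.ne')).comp (x k) h1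
  have hg : HasFDerivAt (fun y : I → ℝ => (1 + y k ^ s) ^ m)
      (((m : ℝ) * (1 + x k ^ s) ^ (m - 1) * ((s : ℝ) * x k ^ (s - 1))) •
        (ContinuousLinearMap.proj k : (I → ℝ) →L[ℝ] ℝ)) x :=
    by have := hD.comp_hasFDerivAt x (hasFDerivAt_apply (𝕜 := ℝ) k x); exact this
  have hf : HasFDerivAt (fun y : I → ℝ => y i)
      (ContinuousLinearMap.proj i : (I → ℝ) →L[ℝ] ℝ) x :=
    (hasFDerivAt_apply (𝕜 := ℝ) i x)
  have h2 := hf.mul hg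
  have h3 : HasFDerivAt (xMutFun ε k i)
      (x i • (((m : ℝ) * (1 + x k ^ s) ^ (m - 1) * ((s : ℝ) * x k ^ (s - 1))) •
        (ContinuousLinearMap.proj k : (I → ℝ) →L[ℝ] ℝ))
       + ((1 + x k ^ s) ^ m) • (ContinuousLinearMap.proj i : (I → ℝ) →L[ℝ] ℝ)) x := by
    have e : xMutFun ε k i = (fun y : I → ℝ => y i) * fun y => (1 + y k ^ s) ^ m := by
      funext y; exact if_neg hik
    rw [e]; exact h2
  rw [h3.fderiv]
  simp only [ContinuousLinearMap.add_apply, ContinuousLinearMap.smul_apply,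
    ContinuousLinearMap.proj_apply, Pi.single_apply, smul_eq_mul]
  split_ifs <;> ring

lemma collapse {I : Type*} [Fintype I] [DecidableEq I] (F : I → I → ℝ) (i k j : I)
    (ci di cj dj : ℝ) :
    ∑ a, ∑ b, F a b * ((if i = a then ci else 0) + (if k = a then di else 0)) *
      ((if j = b then cj else 0) + (if k = b then dj else 0))
    = F i j * ci * cj + F i k * ci * dj + F k j * di * cj + F k k * di * dj := by
  have h : ∀ a, ∑ b, F a b * ((if i = a then ci else 0) + (if k = a then di else 0)) *
      ((if j = b then cj else 0) + (if k = b then dj else 0))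
      = F a j * ((if i = a then ci else 0) + (if k = a then di else 0)) * cj
        + F a k * ((if i = a then ci else 0) + (if k = a then di else 0)) * dj := by
    intro a
    simp only [mul_add, ite_mul, mul_ite, zero_mul, mul_zero, Finset.sum_add_distrib,
      Finset.sum_ite_eq, Finset.mem_univ, if_true]
  simp only [h]
  simp only [mul_add, add_mul, ite_mul, mul_ite, zero_mul, mul_zero, Finset.sum_add_distrib,
    Finset.sum_ite_eq, Finset.mem_univ, if_true]
  ring

lemma collapseL {I : Type*} [Fintype I] [DecidableEq I] (F : I → I → ℝ) (k j : I)
    (d cj dj : ℝ) :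
    ∑ a, ∑ b, F a b * (if k = a then d else 0) *
      ((if j = b then cj else 0) + (if k = b then dj else 0))
    = F k j * d * cj + F k k * d * dj := by
  have h := collapse F k k j 0 d cj dj
  simp only [ite_self, zero_add] at h
  rw [h]; ring

lemma collapseR {I : Type*} [Fintype I] [DecidableEq I] (F : I → I → ℝ) (i k : I)
    (ci di d : ℝ) :
    ∑ a, ∑ b, F a b * ((if i = a then ci else 0) + (if k = a then di else 0)) *
      (if k = b then d else 0)
    = F i k * ci * d + F k k * di * d := by
  have h := collapse F i k k ci di 0 d
  simp only [ite_self, zero_add] at h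
  rw [h]; ring

lemma collapse0 {I : Type*} [Fintype I] [DecidableEq I] (F : I → I → ℝ) (k : I)
    (d d' : ℝ) :
    ∑ a, ∑ b, F a b * (if k = a then d else 0) * (if k = b then d' else 0)
    = F k k * d * d' := by
  have h := collapse F k k k 0 d 0 d'
  simp only [ite_self, zero_add] at h
  rw [h]; ring

lemma key (p : ℝ) (hp : 0 < p) (a c : ℤ) :
    (a : ℝ) * p * ((1 + p ^ (-Int.sign a)) ^ (-a)) *
        (((-c : ℤ) : ℝ) * (1 + p ^ (-Int.sign c)) ^ (-c - 1) *
          (((-Int.sign c : ℤ) : ℝ) * p ^ (-Int.sign c - 1)))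
      + ((-c : ℤ) : ℝ) * p *
        (((-a : ℤ) : ℝ) * (1 + p ^ (-Int.sign a)) ^ (-a - 1) *
          (((-Int.sign a : ℤ) : ℝ) * p ^ (-Int.sign a - 1))) *
        ((1 + p ^ (-Int.sign c)) ^ (-c))
    = (((|a| * -c + a * |(-c)|) / 2 : ℤ) : ℝ) *
        ((1 + p ^ (-Int.sign a)) ^ (-a)) * ((1 + p ^ (-Int.sign c)) ^ (-c)) := by
  have hp' : p ≠ 0 := hp.ne'
  have hq1 : (1:ℝ) + p ≠ 0 := by positivity
  have hq2 : (1:ℝ) + p⁻¹ ≠ 0 := by positivity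
  have hpm2 : p ^ (-2:ℤ) = (p*p)⁻¹ := by
    rw [show (-2:ℤ) = -((2:ℕ):ℤ) by norm_num, zpow_neg, zpow_natCast, pow_two]
  rcases Int.lt_trichotomy a 0 with ha | rfl | ha <;>
    rcases Int.lt_trichotomy c 0 with hc | rfl | hc
  · rw [Int.sign_eq_neg_one_iff_neg.2 ha, Int.sign_eq_neg_one_iff_neg.2 hc]
    have hD : ((|a| * -c + a * |(-c)|) / 2 : ℤ) = 0 := by
      rw [abs_of_neg ha, abs_of_pos (by omega : (0:ℤ) < -c)]; ring_nf; norm_num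
    rw [hD, show -(-1:ℤ) = 1 by norm_num, zpow_one,
      show ((1:ℤ) - 1) = 0 by norm_num, zpow_zero, zpow_sub_one₀ hq1, zpow_sub_one₀ hq1]
    push_cast
    generalize ((1:ℝ)+p) ^ (-a) = A
    generalize ((1:ℝ)+p) ^ (-c) = B
    field_simp
    ring
  · simp
  · rw [Int.sign_eq_neg_one_iff_neg.2 ha, Int.sign_eq_one_iff_pos.2 hc]
    have hD : ((|a| * -c + a * |(-c)|) / 2 : ℤ) = a * c := by
      rw [abs_of_neg ha, abs_of_neg (by omega : -c < (0:ℤ))]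
      rw [show -a * -c + a * -(-c) = 2 * (a * c) by ring, Int.mul_ediv_cancel_left _ (by norm_num)]
    rw [hD, show -(-1:ℤ) = 1 by norm_num, zpow_one,
      show ((1:ℤ) - 1) = 0 by norm_num, zpow_zero,
      show (-(1:ℤ) - 1) = -2 by norm_num, hpm2, zpow_neg_one,
      zpow_sub_one₀ hq1, zpow_sub_one₀ hq2]
    push_cast
    generalize ((1:ℝ)+p) ^ (-a) = A
    generalize ((1:ℝ)+p⁻¹) ^ (-c) = B
    field_simp
    ring
  · simp
  · simp
  · simp
  · rw [Int.sign_eq_one_iff_pos.2 ha, Int.sign_eq_neg_one_iff_neg.2 hc]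
    have hD : ((|a| * -c + a * |(-c)|) / 2 : ℤ) = a * (-c) := by
      rw [abs_of_pos ha, abs_of_pos (by omega : (0:ℤ) < -c)]
      rw [show a * -c + a * -c = 2 * (a * -c) by ring, Int.mul_ediv_cancel_left _ (by norm_num)]
    rw [hD, show -(-1:ℤ) = 1 by norm_num, zpow_one,
      show ((1:ℤ) - 1) = 0 by norm_num, zpow_zero,
      show (-(1:ℤ) - 1) = -2 by norm_num, hpm2, zpow_neg_one,
      zpow_sub_one₀ hq2, zpow_sub_one₀ hq1]
    push_cast
    generalize ((1:ℝ)+p⁻¹) ^ (-a) = A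
    generalize ((1:ℝ)+p) ^ (-c) = B
    field_simp
    ring
  · simp
  · rw [Int.sign_eq_one_iff_pos.2 ha, Int.sign_eq_one_iff_pos.2 hc]
    have hD : ((|a| * -c + a * |(-c)|) / 2 : ℤ) = 0 := by
      rw [abs_of_pos ha, abs_of_neg (by omega : -c < (0:ℤ))]; ring_nf; norm_num
    rw [hD, show (-(1:ℤ) - 1) = -2 by norm_num, hpm2, zpow_neg_one,
      zpow_sub_one₀ hq2, zpow_sub_one₀ hq2]
    push_cast
    generalize ((1:ℝ)+p⁻¹) ^ (-a) = A
    generalize ((1:ℝ)+p⁻¹) ^ (-c) = B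
    field_simp
    ring

theorem poisson_bracket_preserved {I : Type*} [Fintype I] [DecidableEq I]
    (ε : I → I → ℤ) (hskew : ∀ i j, ε i j = -ε j i) (k : I) (i j : I)
    (x : I → ℝ) (hpos : ∀ a, 0 < x a) :
    poissonBracket ε (xMutFun ε k i) (xMutFun ε k j) x =
      (mutate ε k i j : ℝ) * xMutFun ε k i x * xMutFun ε k j x := by
  have hkk : ε k k = 0 := by have := hskew k k; omega
  have hxk := hpos k
  by_cases hi : i = k
  · subst hi
    by_cases hj : j = i
    · subst hj
      rw [poissonBracket]
      calc (∑ a, ∑ b, (ε a b : ℝ) * x a * x b *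
          (fderiv ℝ (xMutFun ε j j) x (Pi.single a 1)) * (fderiv ℝ (xMutFun ε j j) x (Pi.single b 1)))
          = ∑ a, ∑ b, ((ε a b : ℝ) * x a * x b) * (if j = a then -((x j) ^ 2)⁻¹ else 0) *
              (if j = b then -((x j) ^ 2)⁻¹ else 0) := by
            refine Finset.sum_congr rfl fun a _ => Finset.sum_congr rfl fun b _ => ?_
            rw [fderiv_xMutFun_k ε j x hpos a, fderiv_xMutFun_k ε j x hpos b]
        _ = ((ε j j : ℝ) * x j * x j) * (-((x j)^2)⁻¹) * (-((x j)^2)⁻¹) :=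
            collapse0 (fun a b => (ε a b : ℝ) * x a * x b) j _ _
        _ = (mutate ε j j j : ℝ) * xMutFun ε j j x * xMutFun ε j j x := by
            simp [mutate, xMutFun, hkk]
    · -- i = k, j ≠ k
      rw [poissonBracket]
      calc (∑ a, ∑ b, (ε a b : ℝ) * x a * x b *
          (fderiv ℝ (xMutFun ε i i) x (Pi.single a 1)) * (fderiv ℝ (xMutFun ε i j) x (Pi.single b 1)))
          = ∑ a, ∑ b, ((ε a b : ℝ) * x a * x b) * (if i = a then -((x i) ^ 2)⁻¹ else 0) *
              ((if j = b then (1 + x i ^ (-(Int.sign (ε j i)))) ^ (-(ε j i)) else 0)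
               + (if i = b then x j * (((-(ε j i) : ℤ) : ℝ) * (1 + x i ^ (-(Int.sign (ε j i)))) ^ (-(ε j i) - 1)
                   * (((-(Int.sign (ε j i)) : ℤ) : ℝ) * x i ^ (-(Int.sign (ε j i)) - 1))) else 0)) := by
            refine Finset.sum_congr rfl fun a _ => Finset.sum_congr rfl fun b _ => ?_
            rw [fderiv_xMutFun_k ε i x hpos a, fderiv_xMutFun_ne ε i j hj x hpos b]
        _ = ((ε i j : ℝ) * x i * x j) * (-((x i)^2)⁻¹) * ((1 + x i ^ (-(Int.sign (ε j i)))) ^ (-(ε j i)))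
            + ((ε i i : ℝ) * x i * x i) * (-((x i)^2)⁻¹) * (x j * (((-(ε j i) : ℤ) : ℝ) * (1 + x i ^ (-(Int.sign (ε j i)))) ^ (-(ε j i) - 1)
                   * (((-(Int.sign (ε j i)) : ℤ) : ℝ) * x i ^ (-(Int.sign (ε j i)) - 1)))) :=
            collapseL (fun a b => (ε a b : ℝ) * x a * x b) i j _ _ _
        _ = (mutate ε i i j : ℝ) * xMutFun ε i i x * xMutFun ε i j x := by
            rw [mutate, xMutFun, xMutFun]
            rw [if_pos (Or.inl rfl), if_pos rfl, if_neg hj, hkk, Int.cast_zero, Int.cast_neg]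
            generalize (1 + x i ^ (-(Int.sign (ε j i)))) ^ (-(ε j i)) = C
            generalize (1 + x i ^ (-(Int.sign (ε j i)))) ^ (-(ε j i) - 1) = C'
            generalize x i ^ (-(Int.sign (ε j i)) - 1) = P'
            field_simp
            push_cast
            ring
  · by_cases hj : j = k
    · subst hj
      rw [poissonBracket]
      calc (∑ a, ∑ b, (ε a b : ℝ) * x a * x b *
          (fderiv ℝ (xMutFun ε j i) x (Pi.single a 1)) * (fderiv ℝ (xMutFun ε j j) x (Pi.single b 1)))
          = ∑ a, ∑ b, ((ε a b : ℝ) * x a * x b) *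
              ((if i = a then (1 + x j ^ (-(Int.sign (ε i j)))) ^ (-(ε i j)) else 0)
               + (if j = a then x i * (((-(ε i j) : ℤ) : ℝ) * (1 + x j ^ (-(Int.sign (ε i j)))) ^ (-(ε i j) - 1)
                   * (((-(Int.sign (ε i j)) : ℤ) : ℝ) * x j ^ (-(Int.sign (ε i j)) - 1))) else 0)) *
              (if j = b then -((x j) ^ 2)⁻¹ else 0) := by
            refine Finset.sum_congr rfl fun a _ => Finset.sum_congr rfl fun b _ => ?_
            rw [fderiv_xMutFun_ne ε j i hi x hpos a, fderiv_xMutFun_k ε j x hpos b]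
        _ = ((ε i j : ℝ) * x i * x j) * ((1 + x j ^ (-(Int.sign (ε i j)))) ^ (-(ε i j))) * (-((x j)^2)⁻¹)
            + ((ε j j : ℝ) * x j * x j) * (x i * (((-(ε i j) : ℤ) : ℝ) * (1 + x j ^ (-(Int.sign (ε i j)))) ^ (-(ε i j) - 1)
                   * (((-(Int.sign (ε i j)) : ℤ) : ℝ) * x j ^ (-(Int.sign (ε i j)) - 1)))) * (-((x j)^2)⁻¹) :=
            collapseR (fun a b => (ε a b : ℝ) * x a * x b) i j _ _ _
        _ = (mutate ε j i j : ℝ) * xMutFun ε j i x * xMutFun ε j j x := by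
            rw [mutate, xMutFun, xMutFun]
            rw [if_pos (Or.inr rfl), if_pos rfl, if_neg hi, hkk, Int.cast_zero, Int.cast_neg]
            generalize (1 + x j ^ (-(Int.sign (ε i j)))) ^ (-(ε i j)) = C
            generalize (1 + x j ^ (-(Int.sign (ε i j)))) ^ (-(ε i j) - 1) = C'
            generalize x j ^ (-(Int.sign (ε i j)) - 1) = P'
            field_simp
            ring
    · -- main case : i ≠ k, j ≠ k
      have hkj : ε k j = -ε j k := hskew k j
      rw [poissonBracket]
      calc (∑ a, ∑ b, (ε a b : ℝ) * x a * x b *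
          (fderiv ℝ (xMutFun ε k i) x (Pi.single a 1)) * (fderiv ℝ (xMutFun ε k j) x (Pi.single b 1)))
          = ∑ a, ∑ b, ((ε a b : ℝ) * x a * x b) *
              ((if i = a then (1 + x k ^ (-(Int.sign (ε i k)))) ^ (-(ε i k)) else 0)
               + (if k = a then x i * (((-(ε i k) : ℤ) : ℝ) * (1 + x k ^ (-(Int.sign (ε i k)))) ^ (-(ε i k) - 1)
                   * (((-(Int.sign (ε i k)) : ℤ) : ℝ) * x k ^ (-(Int.sign (ε i k)) - 1))) else 0)) *
              ((if j = b then (1 + x k ^ (-(Int.sign (ε j k)))) ^ (-(ε j k)) else 0)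
               + (if k = b then x j * (((-(ε j k) : ℤ) : ℝ) * (1 + x k ^ (-(Int.sign (ε j k)))) ^ (-(ε j k) - 1)
                   * (((-(Int.sign (ε j k)) : ℤ) : ℝ) * x k ^ (-(Int.sign (ε j k)) - 1))) else 0)) := by
            refine Finset.sum_congr rfl fun a _ => Finset.sum_congr rfl fun b _ => ?_
            rw [fderiv_xMutFun_ne ε k i hi x hpos a, fderiv_xMutFun_ne ε k j hj x hpos b]
        _ = (mutate ε k i j : ℝ) * xMutFun ε k i x * xMutFun ε k j x := by
            rw [collapse (fun a b => (ε a b : ℝ) * x a * x b) i k j]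
            rw [mutate, xMutFun, xMutFun]
            simp only [if_neg hi, if_neg hj]
            rw [if_neg (by push_neg; exact ⟨hi, hj⟩), hkk, hkj]
            rw [Int.cast_add]
            linear_combination (x i * x j) * key (x k) (hpos k) (ε i k) (ε j k)
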